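/- Let P = (tn, fp, fn, tp) be a two-class classification performance such that tp ≠ tn, fn ≠ fp, and the four sums tn + fp, tn + fn, tp + fp, tp + fn are all strictly positive. Then the double integral VUT(P) = ∫₀¹ ∫₀¹ R_{a,b}(P) db da exists and equals 1/2 − (1 / (2·(tp − tn)·(fn − fp))) · [ (tn² − fn²)·ln(tn + fn) + (tp² − fp²)·ln(tp + fp) + (fp² − tn²)·ln(fp + tn) + (fn² − tp²)·ln(fn + tp) ]. -/

import Mathlib

open MeasureTheory

/-- Canonical ranking score `R_{a,b}` of a performance `(tn, fp, fn, tp)`. -/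
noncomputable def Rab (a b tn fp fn tp : ℝ) : ℝ :=
  ((1 - a) * tn + a * tp) / ((1 - a) * tn + (1 - b) * fp + b * fn + a * tp)

lemma inner_int (N fp fn : ℝ) (h1 : 0 < N + fp) (h2 : 0 < N + fn) (hc : fn ≠ fp) :
    ∫ b in (0:ℝ)..1, N / (N + fp + (fn - fp) * b) =
      N / (fn - fp) * (Real.log (N + fn) - Real.log (N + fp)) := by
  set c := fn - fp with hcdef
  have hcne : c ≠ 0 := sub_ne_zero.mpr hc
  have hpos : ∀ b ∈ Set.uIcc (0:ℝ) 1, 0 < N + fp + c * b := by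
    intro b hb
    rw [Set.uIcc_of_le zero_le_one] at hb
    have hb0 := hb.1; have hb1 := hb.2
    nlinarith [mul_nonneg (sub_nonneg.mpr hb1) h1.le, mul_nonneg hb0 h2.le]
  have hderiv : ∀ b ∈ Set.uIcc (0:ℝ) 1,
      HasDerivAt (fun t => N / c * Real.log (N + fp + c * t)) (N / (N + fp + c * b)) b := by
    intro b hb
    have hb' := hpos b hb
    have h1' : HasDerivAt (fun t : ℝ => N + fp + c * t) c b := by
      simpa using ((hasDerivAt_id b).const_mul c).const_add (N + fp)
    have h2' := (h1'.log hb'.ne').const_mul (N / c)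
    refine h2'.congr_deriv ?_
    field_simp
  have hint : IntervalIntegrable (fun b => N / (N + fp + c * b)) volume 0 1 := by
    apply ContinuousOn.intervalIntegrable
    exact continuousOn_const.div (by fun_prop) (fun b hb => (hpos b hb).ne')
  rw [intervalIntegral.integral_eq_sub_of_hasDerivAt hderiv hint]
  have e1 : N + fp + c * 1 = N + fn := by rw [hcdef]; ring
  have e0 : N + fp + c * 0 = N + fp := by ring
  rw [e1, e0]; ring

lemma hasDerivAt_H (k u : ℝ) (h : 0 < u + k) :
    HasDerivAt (fun u : ℝ => (u ^ 2 - k ^ 2) / 2 * Real.log (u + k) - u ^ 2 / 4 + k * u / 2)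
      (u * Real.log (u + k)) u := by
  have hl : HasDerivAt (fun u : ℝ => u + k) 1 u := by
    simpa using (hasDerivAt_id u).add_const k
  have hlog := hl.log h.ne'
  have hq : HasDerivAt (fun u : ℝ => (u ^ 2 - k ^ 2) / 2) u u := by
    have := ((hasDerivAt_pow 2 u).sub_const (k ^ 2)).div_const 2
    simpa using this
  have h1 := hq.mul hlog
  have h2 : HasDerivAt (fun u : ℝ => u ^ 2 / 4) (u / 2) u := by
    have := (hasDerivAt_pow 2 u).div_const 4
    refine this.congr_deriv ?_; push_cast; ring
  have h3 : HasDerivAt (fun u : ℝ => k * u / 2) (k / 2) u := by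
    simpa using ((hasDerivAt_id u).const_mul k).div_const 2
  have := (h1.sub h2).add h3
  refine this.congr_deriv ?_
  field_simp; ring

/-- Closed-form expression of the Volume Under Tile
`VUT(P) = ∫₀¹ ∫₀¹ R_{a,b}(P) db da` when `tp ≠ tn` and `fn ≠ fp`. -/
theorem volumeUnderTile_closedForm
    (tn fp fn tp : ℝ) (htn : 0 ≤ tn) (hfp : 0 ≤ fp) (hfn : 0 ≤ fn) (htp : 0 ≤ tp)
    (hsum : tn + fp + fn + tp = 1)
    (h₁ : tp ≠ tn) (h₂ : fn ≠ fp)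
    (hs₁ : 0 < tn + fp) (hs₂ : 0 < tn + fn) (hs₃ : 0 < tp + fp) (hs₄ : 0 < tp + fn) :
    IntegrableOn (fun q : ℝ × ℝ => Rab q.1 q.2 tn fp fn tp)
        (Set.Icc (0:ℝ) 1 ×ˢ Set.Icc (0:ℝ) 1) volume ∧
      (∫ a in (0:ℝ)..1, ∫ b in (0:ℝ)..1, Rab a b tn fp fn tp) =
        1 / 2 - (1 / (2 * (tp - tn) * (fn - fp))) *
          ((tn ^ 2 - fn ^ 2) * Real.log (tn + fn) +
            (tp ^ 2 - fp ^ 2) * Real.log (tp + fp) +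
            (fp ^ 2 - tn ^ 2) * Real.log (fp + tn) +
            (fn ^ 2 - tp ^ 2) * Real.log (fn + tp)) := by
  have hd : tp - tn ≠ 0 := sub_ne_zero.mpr h₁
  have hc : fn - fp ≠ 0 := sub_ne_zero.mpr h₂
  -- positivity of N a + fp, N a + fn for a ∈ [0,1]
  have hNfp : ∀ a : ℝ, a ∈ Set.Icc (0:ℝ) 1 → 0 < (1 - a) * tn + a * tp + fp := by
    intro a ha
    nlinarith [mul_nonneg (sub_nonneg.mpr ha.2) hs₁.le, mul_nonneg ha.1 hs₃.le]
  have hNfn : ∀ a : ℝ, a ∈ Set.Icc (0:ℝ) 1 → 0 < (1 - a) * tn + a * tp + fn := by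
    intro a ha
    nlinarith [mul_nonneg (sub_nonneg.mpr ha.2) hs₂.le, mul_nonneg ha.1 hs₄.le]
  -- denominator positive on the square
  have hden : ∀ q : ℝ × ℝ, q ∈ Set.Icc (0:ℝ) 1 ×ˢ Set.Icc (0:ℝ) 1 →
      0 < (1 - q.1) * tn + (1 - q.2) * fp + q.2 * fn + q.1 * tp := by
    rintro ⟨a, b⟩ ⟨ha, hb⟩
    have h1 := hNfp a ha
    have h2 := hNfn a ha
    have hb0 := hb.1; have hb1 := hb.2
    simp only at *
    nlinarith [mul_nonneg (sub_nonneg.mpr hb1) h1.le, mul_nonneg hb0 h2.le]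
  constructor
  · apply ContinuousOn.integrableOn_compact (isCompact_Icc.prod isCompact_Icc)
    exact ContinuousOn.div (by fun_prop) (by fun_prop) (fun q hq => (hden q hq).ne')
  · -- rewrite inner integral
    have hinner : ∀ a ∈ Set.uIcc (0:ℝ) 1,
        (∫ b in (0:ℝ)..1, Rab a b tn fp fn tp) =
          ((1 - a) * tn + a * tp) / (fn - fp) *
            (Real.log ((1 - a) * tn + a * tp + fn) - Real.log ((1 - a) * tn + a * tp + fp)) := by
      intro a ha
      rw [Set.uIcc_of_le zero_le_one] at ha
      have : ∀ b : ℝ, Rab a b tn fp fn tp =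
          ((1 - a) * tn + a * tp) / (((1 - a) * tn + a * tp) + fp + (fn - fp) * b) := by
        intro b; unfold Rab; congr 1; ring
      simp only [this]
      exact inner_int _ fp fn (hNfp a ha) (hNfn a ha) h₂
    rw [intervalIntegral.integral_congr hinner]
    -- outer integral via FTC
    set c := fn - fp
    set d := tp - tn
    set H : ℝ → ℝ → ℝ := fun k u => (u ^ 2 - k ^ 2) / 2 * Real.log (u + k) - u ^ 2 / 4 + k * u / 2
      with hH
    have hN' : ∀ a : ℝ, HasDerivAt (fun a : ℝ => (1 - a) * tn + a * tp) d a := by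
      intro a
      have h := ((hasDerivAt_id a).const_mul d).const_add tn
      simp only [id_eq, mul_one] at h
      have he : (fun a : ℝ => tn + d * a) = fun a : ℝ => (1 - a) * tn + a * tp := by
        funext x; simp only [d]; ring
      rwa [he] at h
    have hG : ∀ a ∈ Set.uIcc (0:ℝ) 1,
        HasDerivAt (fun a => (1 / (c * d)) * (H fn ((1 - a) * tn + a * tp) - H fp ((1 - a) * tn + a * tp)))
          (((1 - a) * tn + a * tp) / c *
            (Real.log ((1 - a) * tn + a * tp + fn) - Real.log ((1 - a) * tn + a * tp + fp))) a := by
      intro a ha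
      rw [Set.uIcc_of_le zero_le_one] at ha
      set N := (1 - a) * tn + a * tp with hNdef
      have k1 : HasDerivAt (fun a : ℝ => H fn ((1 - a) * tn + a * tp))
          ((N * Real.log (N + fn)) * d) a :=
        by have := (hasDerivAt_H fn N (hNfn a ha)).comp a (hN' a); exact this
      have k2 : HasDerivAt (fun a : ℝ => H fp ((1 - a) * tn + a * tp))
          ((N * Real.log (N + fp)) * d) a :=
        by have := (hasDerivAt_H fp N (hNfp a ha)).comp a (hN' a); exact this
      have := (k1.sub k2).const_mul (1 / (c * d))
      refine this.congr_deriv ?_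
      field_simp
    have hgint : IntervalIntegrable (fun a => ((1 - a) * tn + a * tp) / c *
        (Real.log ((1 - a) * tn + a * tp + fn) - Real.log ((1 - a) * tn + a * tp + fp)))
        volume 0 1 := by
      apply ContinuousOn.intervalIntegrable
      rw [Set.uIcc_of_le zero_le_one]
      apply ContinuousOn.mul (by fun_prop)
      exact (ContinuousOn.log (by fun_prop) (fun a ha => (hNfn a ha).ne')).sub
        (ContinuousOn.log (by fun_prop) (fun a ha => (hNfp a ha).ne'))
    rw [intervalIntegral.integral_eq_sub_of_hasDerivAt hG hgint]
    have e1 : (1 - (1:ℝ)) * tn + 1 * tp = tp := by ring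
    have e0 : (1 - (0:ℝ)) * tn + 0 * tp = tn := by ring
    rw [e1, e0, hH]
    simp only
    rw [add_comm fp tn, add_comm fn tp]
    have hfintp : tp + fn ≠ 0 := hs₄.ne'
    have hfptp : tp + fp ≠ 0 := hs₃.ne'
    have hfntn : tn + fn ≠ 0 := hs₂.ne'
    have hfptn : tn + fp ≠ 0 := hs₁.ne'
    field_simp
    ring
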